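/- Let P = I + N be a unipotent linear map on ℝ^d with N^{k+1} = 0 and N^k ≠ 0, and suppose there is a bilinear pairing ⟨·,·⟩ and elements E, C with ⟨N^k E, C⟩ > 0, preserved in the sense ⟨P^m w, C⟩ defined for all m. Let D satisfy: ⟨P^m(ℓD − E), C⟩ > 0 for all m ≥ 0 for some fixed ℓ > 0 (ampleness of ℓD − E). Then N^k D ≠ 0. -/
import Mathlib

open Filter

/-- forward difference operator -/
private def fd (h : ℕ → ℝ) (m : ℕ) : ℝ := h (m + 1) - h m

private lemma fd_step (h : ℕ → ℝ) (c : ℝ) (hc : 0 < c) (M : ℕ)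
    (hM : ∀ m ≥ M, fd h m ≤ -c) : ∀ᶠ m in atTop, h m ≤ -c := by
  have key : ∀ n : ℕ, h (M + n) ≤ h M - n * c := by
    intro n
    induction n with
    | zero => simp
    | succ n ih =>
      have := hM (M + n) (Nat.le_add_right _ _)
      have : h (M + n + 1) ≤ h (M + n) - c := by
        simp only [fd] at this; linarith
      push_cast
      calc h (M + (n + 1)) = h (M + n + 1) := by ring_nf
        _ ≤ h (M + n) - c := this
        _ ≤ h M - n * c - c := by linarith [ih]
        _ = h M - (n + 1) * c := by ring
  set n0 : ℕ := ⌈(h M + c) / c⌉₊ with hn0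
  have hn0c : h M + c ≤ n0 * c := by
    have : (h M + c) / c ≤ n0 := Nat.le_ceil _
    calc h M + c = ((h M + c) / c) * c := by field_simp
      _ ≤ n0 * c := by nlinarith
  filter_upwards [eventually_ge_atTop (M + n0)] with m hm
  have hrw : M + (m - M) = m := by omega
  have h1 := key (m - M)
  rw [hrw] at h1
  have h2 : (n0 : ℝ) ≤ (m - M : ℕ) := by exact_mod_cast (by omega : n0 ≤ m - M)
  nlinarith

private lemma descent (c : ℝ) (hc : 0 < c) :
    ∀ (j : ℕ) (h : ℕ → ℝ), (∀ᶠ m in atTop, fd^[j] h m ≤ -c) →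
      ∀ᶠ m in atTop, h m ≤ -c := by
  intro j
  induction j with
  | zero => intro h hh; simpa using hh
  | succ j ih =>
    intro h hh
    rw [Function.iterate_succ_apply] at hh
    have hfd : ∀ᶠ m in atTop, fd h m ≤ -c := ih (fd h) hh
    obtain ⟨M, hM⟩ := eventually_atTop.mp hfd
    exact fd_step h c hc M hM

/-- Let `P = I + N` be unipotent with `N^(k+1) = 0`, `N^k ≠ 0`, and a
bilinear pairing with `⟨N^k E, C⟩ > 0`. If `⟨P^m (ℓ·D − E), C⟩ > 0` for all `m ≥ 0`
for some fixed `ℓ > 0`, then `N^k D ≠ 0`. -/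
theorem Nk_ample_ne_zero
    {V W : Type*} [AddCommGroup V] [Module ℝ V] [AddCommGroup W] [Module ℝ W]
    (pair : V →ₗ[ℝ] W →ₗ[ℝ] ℝ)
    (P N : Module.End ℝ V) (hPN : P = 1 + N) (k : ℕ)
    (hN : N ^ (k + 1) = 0) (hNk : N ^ k ≠ 0)
    (E : V) (C : W) (hE : 0 < pair ((N ^ k) E) C)
    (D : V) (l : ℝ) (hl : 0 < l)
    (hamp : ∀ m : ℕ, 0 < pair ((P ^ m) (l • D - E)) C) :
    (N ^ k) D ≠ 0 := by
  intro hND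
  set v : V := l • D - E with hv
  set c : ℝ := pair ((N ^ k) E) C with hc
  -- P^m = 1 + S * N for some S
  have unip : ∀ m : ℕ, ∃ S : Module.End ℝ V, P ^ m = 1 + S * N := by
    intro m
    induction m with
    | zero => exact ⟨0, by simp⟩
    | succ m ih =>
      obtain ⟨S, hS⟩ := ih
      refine ⟨1 + S + S * N, ?_⟩
      rw [pow_succ, hS, hPN]
      noncomm_ring
  -- the iterated difference of g
  set g : ℕ → ℝ := fun m => pair ((P ^ m) v) C with hg
  have hiter : ∀ (j : ℕ) (m : ℕ), fd^[j] g m = pair ((P ^ m) ((N ^ j) v)) C := by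
    intro j
    induction j with
    | zero => intro m; simp [g]
    | succ j ih =>
      intro m
      rw [Function.iterate_succ_apply', fd, ih, ih]
      have hP1 : (P ^ (m + 1)) ((N ^ j) v) =
          (P ^ m) ((N ^ j) v) + (P ^ m) ((N ^ (j + 1)) v) := by
        have : (P ^ (m + 1)) ((N ^ j) v) = (P ^ m) (P ((N ^ j) v)) := by
          rw [pow_succ]; rfl
        rw [this, hPN]
        have : ((1 : Module.End ℝ V) + N) ((N ^ j) v) = (N ^ j) v + (N ^ (j + 1)) v := by
          simp [pow_succ']
        rw [this, map_add]
      rw [hP1, map_add]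
      simp
  have hNkv : (N ^ k) v = -((N ^ k) E) := by
    simp [hv, map_sub, map_smul, hND]
  have hfk : ∀ m : ℕ, fd^[k] g m = -c := by
    intro m
    rw [hiter k m]
    obtain ⟨S, hS⟩ := unip m
    have : (P ^ m) ((N ^ k) v) = (N ^ k) v := by
      rw [hS]
      have hNN : N ((N ^ k) v) = 0 := by
        have h1 : N ((N ^ k) v) = (N ^ (k + 1)) v := by rw [pow_succ']; rfl
        rw [h1, hN]; rfl
      calc ((1 : Module.End ℝ V) + S * N) ((N ^ k) v)
          = (N ^ k) v + S (N ((N ^ k) v)) := rfl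
        _ = (N ^ k) v := by rw [hNN, map_zero, add_zero]
    rw [this, hNkv]
    simp [hc]
  have hev : ∀ᶠ m in atTop, g m ≤ -c := by
    apply descent c hE k g
    filter_upwards with m
    rw [hfk m]
  obtain ⟨m, hm⟩ := hev.exists
  have := hamp m
  simp only [hg] at hm
  linarith
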